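/- Let B(z) = A + (z − z₁)⁻¹ • (p·q†) be an elementary divisor with pole z₁ and zero ζ₁, whose rank-one part is the outer product of a nonzero column vector p and a nonzero row vector q†. Let z ≠ z₁ be a complex number and let w†, v† be row vectors with v† = w†·B(z). If the scalars w†·p and v†·A⁻¹·p are both nonzero, then the rank-one part is recovered as p·q† = p · ((z₁ − z)·(w†·p)⁻¹ • w† + (z − ζ₁)·(v†·A⁻¹·p)⁻¹ • (v†·A⁻¹)) · A. -/

import Mathlib

open Matrix

/-- A 1×1 matrix equals its single entry times the identity. -/
lemma one_by_one_eq_smul_one (M : Matrix (Fin 1) (Fin 1) ℂ) :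
    M = (M 0 0) • (1 : Matrix (Fin 1) (Fin 1) ℂ) := by
  ext i j
  fin_cases i; fin_cases j; simp

/-- Recovering the rank-one part of an elementary divisor from its action on a
row vector: if `v† = w† B(z)` with `B(z) = A + (z - z₁)⁻¹ • (p·q†)`, then
`p·q† = p ((z₁ - z)(w†p)⁻¹ • w† + (z - ζ₁)(v†A⁻¹p)⁻¹ • (v†A⁻¹)) A`. -/
theorem elementary_divisor_recover_row
    (r : ℕ) (hr : 1 ≤ r)
    (A : Matrix (Fin r) (Fin r) ℂ) (hA : IsUnit A.det)
    (p : Matrix (Fin r) (Fin 1) ℂ) (q : Matrix (Fin 1) (Fin r) ℂ)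
    (hp : p ≠ 0) (hq : q ≠ 0)
    (z₁ ζ₁ : ℂ) (hζ : (p * q * A⁻¹).trace = z₁ - ζ₁)
    (z : ℂ) (hz : z ≠ z₁)
    (w v : Matrix (Fin 1) (Fin r) ℂ)
    (hv : v = w * (A + (z - z₁)⁻¹ • (p * q)))
    (h1 : (w * p) 0 0 ≠ 0) (h2 : (v * A⁻¹ * p) 0 0 ≠ 0) :
    p * q = p * (((z₁ - z) * ((w * p) 0 0)⁻¹) • w
      + ((z - ζ₁) * ((v * A⁻¹ * p) 0 0)⁻¹) • (v * A⁻¹)) * A := by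
  have hA1 : A⁻¹ * A = 1 := nonsing_inv_mul A hA
  have hA2 : A * A⁻¹ = 1 := mul_nonsing_inv A hA
  have hzz : z - z₁ ≠ 0 := sub_ne_zero.mpr hz
  set α : ℂ := (w * p) 0 0 with hα
  have hwp : w * p = α • (1 : Matrix (Fin 1) (Fin 1) ℂ) := one_by_one_eq_smul_one _
  -- q * A⁻¹ * p is the scalar z₁ - ζ₁
  have hqp : q * A⁻¹ * p = (z₁ - ζ₁) • (1 : Matrix (Fin 1) (Fin 1) ℂ) := by
    have htr : (q * A⁻¹ * p).trace = z₁ - ζ₁ := by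
      rw [← hζ, Matrix.trace_mul_comm (q * A⁻¹) p, Matrix.mul_assoc]
    have := one_by_one_eq_smul_one (q * A⁻¹ * p)
    rwa [show (q * A⁻¹ * p) 0 0 = (q * A⁻¹ * p).trace from (Matrix.trace_fin_one _).symm,
      htr] at this
  -- compute v * A⁻¹
  have hvA : v * A⁻¹ = w + ((z - z₁)⁻¹ * α) • (q * A⁻¹) := by
    rw [hv, Matrix.mul_add, Matrix.add_mul, Matrix.mul_smul, Matrix.smul_mul,
      Matrix.mul_assoc w A A⁻¹, hA2, Matrix.mul_one]
    congr 1
    rw [show w * (p * q) * A⁻¹ = (w * p) * (q * A⁻¹) by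
      rw [Matrix.mul_assoc, Matrix.mul_assoc, Matrix.mul_assoc], hwp,
      Matrix.smul_mul, Matrix.one_mul, smul_smul]
  -- compute v * A⁻¹ * p
  have hvAp : v * A⁻¹ * p
      = (α + (z - z₁)⁻¹ * α * (z₁ - ζ₁)) • (1 : Matrix (Fin 1) (Fin 1) ℂ) := by
    rw [hvA, Matrix.add_mul, Matrix.smul_mul, hwp, Matrix.mul_assoc,
      ← Matrix.mul_assoc q A⁻¹ p, hqp, smul_smul, ← add_smul]
  set β : ℂ := (v * A⁻¹ * p) 0 0 with hβdef
  have hβ : β = α + (z - z₁)⁻¹ * α * (z₁ - ζ₁) := by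
    rw [hβdef, hvAp]; simp
  have hβ' : β = α * (z - ζ₁) * (z - z₁)⁻¹ := by
    rw [hβ]; field_simp; ring
  have hζz : z - ζ₁ ≠ 0 := by
    intro h
    apply h2
    show β = 0
    rw [hβ', h, mul_zero, zero_mul]
  -- the key scalar identities
  have hs1 : (z₁ - z) * α⁻¹ + (z - ζ₁) * β⁻¹ = 0 := by
    rw [hβ']; field_simp; ring
  have hs2 : (z - ζ₁) * β⁻¹ * ((z - z₁)⁻¹ * α) = 1 := by
    rw [hβ']; field_simp
  -- the bracket equals q * A⁻¹
  have hbr : ((z₁ - z) * α⁻¹) • w + ((z - ζ₁) * β⁻¹) • (v * A⁻¹) = q * A⁻¹ := by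
    rw [hvA, smul_add, ← add_assoc, ← add_smul, hs1, zero_smul, zero_add,
      smul_smul, hs2, one_smul]
  rw [hbr, Matrix.mul_assoc, Matrix.mul_assoc, hA1, Matrix.mul_one]
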